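/- Let 𝒱 = {v_1, …, v_n} be nonempty closed subsets of ℝ³ (EuclideanSpace ℝ (Fin 3)) with union 𝒪_𝒱, let v^l_1, …, v^l_m be nonempty closed sets with attachment map σ : {1,…,m} → {1,…,n} such that v^l_j ∩ v_{σ(j)} ≠ ∅ for each j, and let f : ℝ → ℝ be a shaping function with f(t) > 0 for all t > 0. Then the occupied space of the interpolated collision constraint at the endpoint values of α satisfies: at α = 0, {x | min(SDF_𝒱(x), SDF^0_{v_{σ(1)}→v^l_1}(x), …, SDF^0_{v_{σ(m)}→v^l_m}(x)) ≤ 0} = 𝒪_𝒱, and at α = 1, {x | min(SDF_𝒱(x), SDF^1_{v_{σ(1)}→v^l_1}(x), …, SDF^1_{v_{σ(m)}→v^l_m}(x)) ≤ 0} = 𝒪_𝒱 ∪ v^l_1 ∪ ⋯ ∪ v^l_m. -/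

import Mathlib

/-- Signed distance function of a set `v`. -/
noncomputable def sdf (v : Set (EuclideanSpace ℝ (Fin 3)))
    (x : EuclideanSpace ℝ (Fin 3)) : ℝ :=
  Metric.infDist x v - Metric.infDist x vᶜ

/-- Endpoint behaviour of the interpolated collision constraint: for nonempty closed
sets `v 0, …, v (n-1)` and nonempty closed leaf objects `vl 0, …, vl (m-1)`, each
intersecting its attached `v (σ j)`, and a shaping function `f` with `f t > 0` for
`t > 0`, the occupied space of
`min(SDF_𝒱, SDF^α_{v (σ 0) → vl 0}, …, SDF^α_{v (σ (m-1)) → vl (m-1)})`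
equals `𝒪_𝒱 = ⋃ i, v i` at `α = 0`, and `𝒪_𝒱 ∪ vl 0 ∪ ⋯ ∪ vl (m-1)` at `α = 1`. -/
lemma sdf_nonpos_iff {v : Set (EuclideanSpace ℝ (Fin 3))} (hne : v.Nonempty)
    (hcl : IsClosed v) (x : EuclideanSpace ℝ (Fin 3)) : sdf v x ≤ 0 ↔ x ∈ v := by
  constructor
  · intro h
    by_contra hx
    have h1 : 0 < Metric.infDist x v :=
      (hcl.notMem_iff_infDist_pos hne).mp hx
    have h2 : Metric.infDist x vᶜ = 0 := Metric.infDist_zero_of_mem hx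
    simp [sdf, h2] at h
    linarith
  · intro hx
    have h1 : Metric.infDist x v = 0 := Metric.infDist_zero_of_mem hx
    have h2 : 0 ≤ Metric.infDist x vᶜ := Metric.infDist_nonneg
    simp [sdf, h1]; linarith

theorem occupied_space_interpolated_constraint_endpoints {n m : ℕ}
    (hn : 0 < n) (hm : 0 < m)
    (v : Fin n → Set (EuclideanSpace ℝ (Fin 3)))
    (hvne : ∀ i, (v i).Nonempty) (hvcl : ∀ i, IsClosed (v i))
    (vl : Fin m → Set (EuclideanSpace ℝ (Fin 3)))
    (hlne : ∀ j, (vl j).Nonempty) (hlcl : ∀ j, IsClosed (vl j))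
    (σ : Fin m → Fin n)
    (hattach : ∀ j, (vl j ∩ v (σ j)).Nonempty)
    (f : ℝ → ℝ) (hf0 : f 0 = 0) (hfmono : Monotone f)
    (hfconv : ConvexOn ℝ Set.univ f) (hfpos : ∀ t : ℝ, 0 < t → 0 < f t) :
    {x | min (Finset.univ.inf' ⟨⟨0, hn⟩, Finset.mem_univ _⟩ fun i => sdf (v i) x)
          (Finset.univ.inf' ⟨⟨0, hm⟩, Finset.mem_univ _⟩ fun j =>
            (1 - (0:ℝ)) * f (sdf (v (σ j)) x) + (0:ℝ) * f (sdf (vl j) x)) ≤ 0}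
      = (⋃ i, v i) ∧
    {x | min (Finset.univ.inf' ⟨⟨0, hn⟩, Finset.mem_univ _⟩ fun i => sdf (v i) x)
          (Finset.univ.inf' ⟨⟨0, hm⟩, Finset.mem_univ _⟩ fun j =>
            (1 - (1:ℝ)) * f (sdf (v (σ j)) x) + (1:ℝ) * f (sdf (vl j) x)) ≤ 0}
      = (⋃ i, v i) ∪ ⋃ j, vl j := by
  have key : ∀ (w : Set (EuclideanSpace ℝ (Fin 3))), w.Nonempty → IsClosed w →
      ∀ x, f (sdf w x) ≤ 0 ↔ x ∈ w := by
    intro w hne hcl x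
    rw [← sdf_nonpos_iff hne hcl x]
    constructor
    · intro h
      by_contra hs
      push_neg at hs
      exact absurd h (not_le.mpr (hfpos _ hs))
    · intro h
      calc f (sdf w x) ≤ f 0 := hfmono h
        _ = 0 := hf0
  constructor
  · ext x
    simp only [Set.mem_setOf_eq, min_le_iff, Finset.inf'_le_iff, Finset.mem_univ,
      true_and, Set.mem_iUnion]
    erw [Finset.inf'_le_iff, Finset.inf'_le_iff]
    simp only [Finset.mem_univ, true_and]
    constructor
    · rintro (⟨i, hi⟩ | ⟨j, hj⟩)
      · exact ⟨i, (sdf_nonpos_iff (hvne i) (hvcl i) x).mp hi⟩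
      · refine ⟨σ j, ?_⟩
        rw [← key _ (hvne _) (hvcl _) x]
        linarith [hj]
    · rintro ⟨i, hi⟩
      exact Or.inl ⟨i, (sdf_nonpos_iff (hvne i) (hvcl i) x).mpr hi⟩
  · ext x
    simp only [Set.mem_setOf_eq, min_le_iff, Finset.inf'_le_iff, Finset.mem_univ,
      true_and, Set.mem_union, Set.mem_iUnion]
    erw [Finset.inf'_le_iff, Finset.inf'_le_iff]
    simp only [Finset.mem_univ, true_and]
    constructor
    · rintro (⟨i, hi⟩ | ⟨j, hj⟩)
      · exact Or.inl ⟨i, (sdf_nonpos_iff (hvne i) (hvcl i) x).mp hi⟩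
      · refine Or.inr ⟨j, ?_⟩
        rw [← key _ (hlne _) (hlcl _) x]
        linarith [hj]
    · rintro (⟨i, hi⟩ | ⟨j, hj⟩)
      · exact Or.inl ⟨i, (sdf_nonpos_iff (hvne i) (hvcl i) x).mpr hi⟩
      · refine Or.inr ⟨j, ?_⟩
        have := (key _ (hlne j) (hlcl j) x).mpr hj
        linarith
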